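/- arXiv:0906.0625 — 2 statements merged into one kernel-verified Lean document; each statement's English description precedes it below -/
import Mathlib

section
/- Let V ⊂ ℝⁿ be a bounded nonempty open set and c ∈ ℝ. Suppose w ∈ C(closure V) is locally Lipschitz in V, is an absolute minimizer for H(p,z) = ½|p|² − z on V, and w = c on ∂V. Then w ≡ c on closure V. -/
open Set MeasureTheory
open Metric Filter
open scoped Convolution

noncomputable section

abbrev Euc (n : ℕ) := EuclideanSpace ℝ (Fin n)

/-- Second derivative bilinear form of `φ` at `x` applied to `(p, q)`. -/
def D2 {n : ℕ} (φ : Euc n → ℝ) (x p q : Euc n) : ℝ :=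
  iteratedFDeriv ℝ 2 φ x ![p, q]

/-- `u` is a viscosity subsolution of `Δ∞ u - |Du|² = 0` on `Ω`. -/
def IsSubsol {n : ℕ} (Ω : Set (Euc n)) (u : Euc n → ℝ) : Prop :=
  ∀ φ : Euc n → ℝ, ContDiff ℝ 2 φ → ∀ x₀ ∈ Ω,
    IsLocalMaxOn (fun x => u x - φ x) Ω x₀ →
    D2 φ x₀ (gradient φ x₀) (gradient φ x₀) - ‖gradient φ x₀‖ ^ 2 ≥ 0

/-- `u` is a viscosity supersolution of `Δ∞ u - |Du|² = 0` on `Ω`. -/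
def IsSupersol {n : ℕ} (Ω : Set (Euc n)) (u : Euc n → ℝ) : Prop :=
  ∀ φ : Euc n → ℝ, ContDiff ℝ 2 φ → ∀ x₀ ∈ Ω,
    IsLocalMinOn (fun x => u x - φ x) Ω x₀ →
    D2 φ x₀ (gradient φ x₀) (gradient φ x₀) - ‖gradient φ x₀‖ ^ 2 ≤ 0

/-- `u` is a viscosity solution of `Δ∞ u - |Du|² = 0` on `Ω`. -/
def IsSol {n : ℕ} (Ω : Set (Euc n)) (u : Euc n → ℝ) : Prop :=
  IsSubsol Ω u ∧ IsSupersol Ω u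

/-- `u` is a viscosity subsolution of the normalized equation `Δ∞ u / |Du|² = 1` on `Ω`. -/
def IsNormSubsol {n : ℕ} (Ω : Set (Euc n)) (u : Euc n → ℝ) : Prop :=
  ∀ φ : Euc n → ℝ, ContDiff ℝ 2 φ → ∀ x₀ ∈ Ω,
    IsLocalMaxOn (fun x => u x - φ x) Ω x₀ →
    (gradient φ x₀ ≠ 0 →
      D2 φ x₀ (gradient φ x₀) (gradient φ x₀) ≥ ‖gradient φ x₀‖ ^ 2) ∧
    (gradient φ x₀ = 0 → ∃ p : Euc n, ‖p‖ = 1 ∧ D2 φ x₀ p p ≥ 1)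

/-- `u` is a viscosity supersolution of the normalized equation `Δ∞ u / |Du|² = 1` on `Ω`. -/
def IsNormSupersol {n : ℕ} (Ω : Set (Euc n)) (u : Euc n → ℝ) : Prop :=
  ∀ φ : Euc n → ℝ, ContDiff ℝ 2 φ → ∀ x₀ ∈ Ω,
    IsLocalMinOn (fun x => u x - φ x) Ω x₀ →
    (gradient φ x₀ ≠ 0 →
      D2 φ x₀ (gradient φ x₀) (gradient φ x₀) ≤ ‖gradient φ x₀‖ ^ 2) ∧
    (gradient φ x₀ = 0 → ∃ p : Euc n, ‖p‖ = 1 ∧ D2 φ x₀ p p ≤ 1)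

/-- `u` is an absolute minimizer for the Hamiltonian `H = H(p, z)` on `Ω`. -/
def IsAbsMin {n : ℕ} (H : Euc n → ℝ → ℝ) (Ω : Set (Euc n)) (u : Euc n → ℝ) : Prop :=
  ∀ V : Set (Euc n), IsOpen V → closure V ⊆ Ω →
    ∀ v : Euc n → ℝ, (∃ K : NNReal, LipschitzOnWith K v (closure V)) →
      (∀ x ∈ frontier V, v x = u x) →
      essSup (fun x => H (gradient u x) (u x)) (volume.restrict V) ≤
        essSup (fun x => H (gradient v x) (v x)) (volume.restrict V)

/-- The Hamiltonian `H(p, z) = ½|p|² - z`. -/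
def Ham {n : ℕ} (p : Euc n) (z : ℝ) : ℝ := (1 / 2) * ‖p‖ ^ 2 - z

/-- The auxiliary Hamiltonian `Ĥ(p, z) = ½|p|² - min(z, 0)`. -/
def HamHat {n : ℕ} (p : Euc n) (z : ℝ) : ℝ := (1 / 2) * ‖p‖ ^ 2 - min z 0

/-- `u` is locally Lipschitz on the open set `Ω`. -/
def LocLipOn {n : ℕ} (Ω : Set (Euc n)) (u : Euc n → ℝ) : Prop :=
  ∀ x ∈ Ω, ∃ (K : NNReal) (t : Set (Euc n)), t ∈ nhds x ∧ LipschitzOnWith K u t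

/-- `u` is semiconvex on `S`: for some `C > 0`, `x ↦ u x + C|x|²` is convex on every
convex subset of `S`. -/
def SemiconvexOn {n : ℕ} (S : Set (Euc n)) (u : Euc n → ℝ) : Prop :=
  ∃ C > (0 : ℝ), ∀ B : Set (Euc n), Convex ℝ B → B ⊆ S →
    ConvexOn ℝ B (fun x => u x + C * ‖x‖ ^ 2)

/-- The graph of `f` has a well inside `Ω`. -/
def HasWell {n : ℕ} (Ω : Set (Euc n)) (f : Euc n → ℝ) : Prop :=
  ∃ V : Set (Euc n), V.Nonempty ∧ IsOpen V ∧ V ⊆ Ω ∧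
    sInf (f '' closure V) < sInf (f '' frontier V)

/-- The graph of `f` has a flat piece inside `Ω`. -/
def HasFlat {n : ℕ} (Ω : Set (Euc n)) (f : Euc n → ℝ) : Prop :=
  ∃ V : Set (Euc n), V.Nonempty ∧ IsOpen V ∧ V ⊆ Ω ∧ ∃ c : ℝ, ∀ x ∈ V, f x = c

/-- `Ω_δ = {x ∈ Ω : dist(x, ∂Ω) > δ}`. -/
def innerSet {n : ℕ} (Ω : Set (Euc n)) (δ : ℝ) : Set (Euc n) :=
  {x ∈ Ω | δ < Metric.infDist x (frontier Ω)}

lemma mollify_deriv_zero {n : ℕ} {f : Euc n → ℝ} {C : NNReal} (hf : LipschitzWith C f)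
    {c : Euc n} {r : ℝ}
    (hae : ∀ᵐ y : Euc n, y ∈ ball c r → DifferentiableAt ℝ f y ∧ fderiv ℝ f y = 0)
    (φ : ContDiffBump (0 : Euc n)) {z : Euc n} (hz : ball z φ.rOut ⊆ ball c r) :
    HasFDerivAt (φ.normed volume ⋆[ContinuousLinearMap.lsmul ℝ ℝ, volume] f)
      (0 : Euc n →L[ℝ] ℝ) z := by
  set L : ℝ →L[ℝ] ℝ →L[ℝ] ℝ := ContinuousLinearMap.lsmul ℝ ℝ with hL
  have hloc : LocallyIntegrable f volume := hf.continuous.locallyIntegrable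
  have hφc : ContDiff ℝ 1 (φ.normed volume) := φ.contDiff_normed
  have h1 := (φ.hasCompactSupport_normed).hasFDerivAt_convolution_left L hφc hloc z
  have h2 : ((fderiv ℝ (φ.normed volume)) ⋆[L.precompL (Euc n), volume] f) z = 0 := by
    refine ContinuousLinearMap.ext fun v => ?_
    have hDf : Continuous (fderiv ℝ (φ.normed volume)) := hφc.continuous_fderiv one_ne_zero
    have hint : Integrable
        (fun t => (L.precompL (Euc n)) (fderiv ℝ (φ.normed volume) t) (f (z - t))) volume := by
      have hcont : Continuous
          (fun t => (L.precompL (Euc n)) (fderiv ℝ (φ.normed volume) t) (f (z - t))) :=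
        (((L.precompL (Euc n)).continuous.comp hDf).clm_apply
          (hf.continuous.comp (continuous_const.sub continuous_id)))
      have hsupp : HasCompactSupport
          (fun t => (L.precompL (Euc n)) (fderiv ℝ (φ.normed volume) t) (f (z - t))) := by
        apply ((φ.hasCompactSupport_normed (μ := volume)).fderiv (𝕜 := ℝ)).mono
        intro t ht
        simp only [Function.mem_support, ne_eq] at ht ⊢
        intro h0
        apply ht
        rw [h0]
        simp
      exact hcont.integrable_of_hasCompactSupport hsupp
    rw [ContinuousLinearMap.zero_apply, convolution_def,
      ContinuousLinearMap.integral_apply hint]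
    simp only [ContinuousLinearMap.precompL_apply, hL, ContinuousLinearMap.lsmul_apply,
      smul_eq_mul]
    -- now : ∫ t, fderiv ℝ (φ.normed volume) t v * f (z - t) = 0
    set g : Euc n → ℝ := fun y => φ.normed volume (z - y) with hg
    obtain ⟨D, hD⟩ := hφc.lipschitzWith_of_hasCompactSupport φ.hasCompactSupport_normed one_ne_zero
    have h1l : LipschitzWith 1 (fun y : Euc n => z - y) :=
      LipschitzWith.of_dist_le_mul fun y y' => by
        rw [dist_eq_norm, dist_eq_norm, sub_sub_sub_cancel_left, norm_sub_rev]
        simp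
    have hgl : LipschitzWith (D * 1) g := by
      have := hD.comp h1l
      simpa [Function.comp_def, hg] using this
    have hgc : HasCompactSupport g :=
      φ.hasCompactSupport_normed.comp_homeomorph (Homeomorph.subLeft z)
    have hglin : ∀ y : Euc n, lineDeriv ℝ g y (-v) = fderiv ℝ (φ.normed volume) (z - y) v := by
      intro y
      have hφd : HasFDerivAt (φ.normed volume) (fderiv ℝ (φ.normed volume) (z - y)) (z - y) :=
        ((hφc.differentiable one_ne_zero) (z - y)).hasFDerivAt
      have hyd : HasFDerivAt (fun y : Euc n => z - y)
          (0 - ContinuousLinearMap.id ℝ (Euc n)) y :=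
        (hasFDerivAt_const z y).sub (hasFDerivAt_id y)
      have hcomp := hφd.comp y hyd
      have hcomp' : HasFDerivAt g
          ((fderiv ℝ (φ.normed volume) (z - y)).comp
            (0 - ContinuousLinearMap.id ℝ (Euc n))) y := hcomp
      rw [(hcomp'.hasLineDerivAt (-v)).lineDeriv]
      simp
    have hparts := hf.integral_lineDeriv_mul_eq hgl hgc v (μ := volume)
    have hLHS : ∫ y : Euc n, lineDeriv ℝ f y v * g y = 0 := by
      apply integral_eq_zero_of_ae
      filter_upwards [hae] with y hy
      by_cases hyB : y ∈ ball c r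
      · have h' := hy hyB
        have : HasFDerivAt f (0 : Euc n →L[ℝ] ℝ) y := h'.2 ▸ h'.1.hasFDerivAt
        have hl := (this.hasLineDerivAt v).lineDeriv
        simp only [Pi.zero_apply, ContinuousLinearMap.zero_apply] at hl
        simp [hl]
      · have : g y = 0 := by
          by_contra h0
          have : z - y ∈ Function.support (φ.normed volume) := h0
          rw [φ.support_normed_eq] at this
          apply hyB
          apply hz
          rw [mem_ball, dist_eq_norm] at this ⊢
          rw [norm_sub_rev] at this
          simpa using this
        simp [this]
    have hsub : (∫ t : Euc n, fderiv ℝ (φ.normed volume) t v * f (z - t))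
        = ∫ y : Euc n, lineDeriv ℝ g y (-v) * f y := by
      rw [← integral_sub_left_eq_self
        (fun t : Euc n => fderiv ℝ (φ.normed volume) t v * f (z - t)) volume z]
      apply integral_congr_ae
      filter_upwards with y
      rw [hglin y]
      simp [sub_sub_cancel]
    rw [hsub, ← hparts, hLHS]
  rw [h2] at h1
  exact h1

lemma constOn_of_ae_fderiv_zero {n : ℕ} {f : Euc n → ℝ} {C : NNReal} (hf : LipschitzWith C f)
    {c : Euc n} {r : ℝ}
    (hae : ∀ᵐ y : Euc n, y ∈ ball c r → fderiv ℝ f y = 0) :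
    ∀ x ∈ ball c r, f x = f c := by
  intro x hx
  have hae' : ∀ᵐ y : Euc n, y ∈ ball c r → DifferentiableAt ℝ f y ∧ fderiv ℝ f y = 0 := by
    filter_upwards [hae, hf.ae_differentiableAt] with y h1 h2 hy
    exact ⟨h2, h1 hy⟩
  rw [mem_ball] at hx
  have key : ∀ δ : ℝ, 0 < δ → δ < r - dist x c → dist (f x) (f c) ≤ 2 * C * δ := by
    intro δ hδ hδ'
    set φ : ContDiffBump (0 : Euc n) := ⟨δ/2, δ, by positivity, by linarith⟩ with hφ
    set F := φ.normed volume ⋆[ContinuousLinearMap.lsmul ℝ ℝ, volume] f with hF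
    have hrout : φ.rOut = δ := rfl
    have hball : ∀ z ∈ ball c (r - δ), HasFDerivAt F (0 : Euc n →L[ℝ] ℝ) z := by
      intro z hzb
      apply mollify_deriv_zero hf hae' φ
      intro y hy
      rw [mem_ball] at *
      rw [hrout] at hy
      calc dist y c ≤ dist y z + dist z c := dist_triangle y z c
        _ < δ + (r - δ) := by exact add_lt_add hy hzb
        _ = r := by ring
    have hxball : x ∈ ball c (r - δ) := by rw [mem_ball]; linarith
    have hcball : c ∈ ball c (r - δ) := by
      rw [mem_ball, dist_self]
      have := dist_nonneg (x := x) (y := c)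
      linarith
    have hFconst : ‖F x - F c‖ ≤ 0 * ‖x - c‖ := by
      apply Convex.norm_image_sub_le_of_norm_hasFDerivWithin_le
        (f' := fun _ => (0 : Euc n →L[ℝ] ℝ))
        (fun z hz => (hball z hz).hasFDerivWithinAt)
        (fun z _ => by simp) (convex_ball c (r - δ)) hcball hxball
    have hFx : dist (F x) (f x) ≤ C * δ := by
      apply φ.dist_normed_convolution_le hf.continuous.aestronglyMeasurable
      intro z hz
      rw [hrout] at hz
      calc dist (f z) (f x) ≤ C * dist z x := hf.dist_le_mul z x
        _ ≤ C * δ := by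
            apply mul_le_mul_of_nonneg_left (le_of_lt (mem_ball.mp hz)) C.2
    have hFc : dist (F c) (f c) ≤ C * δ := by
      apply φ.dist_normed_convolution_le hf.continuous.aestronglyMeasurable
      intro z hz
      rw [hrout] at hz
      calc dist (f z) (f c) ≤ C * dist z c := hf.dist_le_mul z c
        _ ≤ C * δ := by
            apply mul_le_mul_of_nonneg_left (le_of_lt (mem_ball.mp hz)) C.2
    have h0 : dist (F x) (F c) = 0 := by
      rw [dist_eq_norm]
      have := norm_nonneg (F x - F c)
      linarith [hFconst]
    calc dist (f x) (f c) ≤ dist (f x) (F x) + dist (F x) (F c) + dist (F c) (f c) :=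
          dist_triangle4 (f x) (F x) (F c) (f c)
      _ ≤ C * δ + 0 + C * δ := by
          rw [dist_comm (f x) (F x)]
          gcongr <;> simp [hFx, hFc, h0, le_refl]
      _ = 2 * C * δ := by ring
  by_contra hne
  have hd : 0 < dist (f x) (f c) := dist_pos.mpr (fun h => hne h)
  set d := dist (f x) (f c) with hdd
  set δ := min ((r - dist x c)/2) (d / (4 * (C + 1))) with hδdef
  have hC1 : (0:ℝ) < C + 1 := by positivity
  have hδpos : 0 < δ := by
    apply lt_min
    · linarith
    · positivity
  have hδlt : δ < r - dist x c := by
    calc δ ≤ (r - dist x c)/2 := min_le_left _ _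
      _ < r - dist x c := by linarith
  have := key δ hδpos hδlt
  have h2 : 2 * (C:ℝ) * δ < d := by
    have hδle : δ ≤ d / (4 * (C + 1)) := min_le_right _ _
    have hCnn : (0:ℝ) ≤ C := C.2
    have e1 : 2 * (C:ℝ) * δ ≤ 2 * C * (d / (4 * (C + 1))) :=
      mul_le_mul_of_nonneg_left hδle (by linarith)
    have e2 : 2 * (C:ℝ) * (d / (4 * (C + 1))) < d := by
      rw [← mul_div_assoc, div_lt_iff₀ (by positivity)]
      nlinarith
    linarith
  linarith

lemma toDual_gradient' {n : ℕ} (w : Euc n → ℝ) (x : Euc n) :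
    (InnerProductSpace.toDual ℝ (Euc n)) (gradient w x) = fderiv ℝ w x := by
  simp [gradient]

lemma fderiv_eq_zero_of_gradient_eq_zero {n : ℕ} {w : Euc n → ℝ} {x : Euc n}
    (h : gradient w x = 0) : fderiv ℝ w x = 0 := by
  rw [← toDual_gradient', h, map_zero]

lemma norm_gradient_le_of_lip {n : ℕ} {w : Euc n → ℝ} {K : NNReal} {t : Set (Euc n)} {x : Euc n}
    (ht : t ∈ nhds x) (hl : LipschitzOnWith K w t) : ‖gradient w x‖ ≤ K := by
  have : ‖gradient w x‖ = ‖fderiv ℝ w x‖ := by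
    rw [← toDual_gradient']
    exact ((InnerProductSpace.toDual ℝ (Euc n)).norm_map _).symm
  rw [this]
  exact norm_fderiv_le_of_lipschitzOn ℝ ht hl

lemma gradBound {n : ℕ} {Ω : Set (Euc n)} {w : Euc n → ℝ} (hwl : LocLipOn Ω w)
    {K : Set (Euc n)} (hK : IsCompact K) (hKΩ : K ⊆ Ω) :
    ∃ C : ℝ, 0 ≤ C ∧ ∀ x ∈ K, ‖gradient w x‖ ≤ C := by
  choose! L t ht hlip using hwl
  have hcover : ∀ x ∈ K, interior (t x) ∈ nhds x := fun x hx =>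
    interior_mem_nhds.mpr (ht x (hKΩ hx))
  obtain ⟨s, hsK, hs⟩ := hK.elim_nhds_subcover (fun x => interior (t x)) hcover
  refine ⟨(s.sup L : NNReal), NNReal.coe_nonneg _, ?_⟩
  intro x hx
  obtain ⟨y, hy, hxy⟩ := Set.mem_iUnion₂.mp (hs hx)
  have h1 : ‖gradient w x‖ ≤ L y :=
    norm_gradient_le_of_lip (isOpen_interior.mem_nhds hxy)
      ((hlip y (hKΩ (hsK y hy))).mono interior_subset)
  exact h1.trans (NNReal.coe_le_coe.mpr (Finset.le_sup hy))

lemma core_ae_bound {n : ℕ} {V S : Set (Euc n)} {w : Euc n → ℝ} {k : ℝ}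
    (hwl : LocLipOn V w) (hwc : ContinuousOn w (closure V)) (hwmin : IsAbsMin Ham V w)
    (hSo : IsOpen S) (hScl : closure S ⊆ V) (hSne : S.Nonempty) (hSb : Bornology.IsBounded S)
    (hfr : ∀ x ∈ frontier S, w x = k) :
    ∀ᵐ x : Euc n, x ∈ S → Ham (gradient w x) (w x) ≤ -k := by
  have hcomp : IsCompact (closure S) := isCompact_of_isClosed_isBounded isClosed_closure hSb.closure
  obtain ⟨C1, hC1nn, hC1⟩ := gradBound hwl hcomp hScl
  have hwcS : ContinuousOn w (closure S) := hwc.mono (hScl.trans subset_closure)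
  obtain ⟨C2, hC2⟩ := hcomp.exists_bound_of_continuousOn hwcS
  have hvol : volume.restrict S ≠ 0 := by
    rw [Ne, Measure.restrict_eq_zero]
    exact hSo.measure_ne_zero volume hSne
  have hRHS : essSup (fun x => Ham (gradient (fun _ : Euc n => k) x) ((fun _ : Euc n => k) x))
      (volume.restrict S) = -k := by
    have heq : (fun x : Euc n => Ham (gradient (fun _ : Euc n => k) x) ((fun _ : Euc n => k) x))
        = fun _ : Euc n => -k := by
      funext x
      rw [Ham, gradient_fun_const]
      simp
    rw [heq, essSup_const _ hvol]
  have hlip : ∃ Kv : NNReal, LipschitzOnWith Kv (fun _ : Euc n => k) (closure S) :=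
    ⟨0, (LipschitzWith.const k).lipschitzOnWith⟩
  have h := hwmin S hSo hScl (fun _ => k) hlip (fun x hx => (hfr x hx).symm)
  rw [hRHS] at h
  have hbdd : Filter.IsBoundedUnder (· ≤ ·) (ae (volume.restrict S))
      (fun x => Ham (gradient w x) (w x)) := by
    refine ⟨(1/2) * C1^2 + C2, ?_⟩
    rw [Filter.eventually_map]
    filter_upwards [ae_restrict_mem hSo.measurableSet] with x hxS
    have h1 : ‖gradient w x‖ ≤ C1 := hC1 x (subset_closure hxS)
    have h2 : ‖w x‖ ≤ C2 := hC2 x (subset_closure hxS)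
    have h3 : ‖gradient w x‖^2 ≤ C1^2 := by
      apply pow_le_pow_left₀ (norm_nonneg _) h1
    have h4 : -w x ≤ C2 := by
      have := abs_le.mp (by rwa [Real.norm_eq_abs] at h2)
      linarith [this.1]
    rw [Ham]
    linarith
  have hle := ae_le_essSup hbdd
  rw [ae_restrict_iff' hSo.measurableSet] at hle
  filter_upwards [hle] with x hx hxS
  exact (hx hxS).trans h

/-- Lemma 2.2: the graph of an absolute minimizer for `H(p,z) = ½|p|² - z`
contains no wells: if it is constant on the boundary then it is constant. -/
theorem no_wells {n : ℕ} (V : Set (Euc n))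
    (hVo : IsOpen V) (hVb : Bornology.IsBounded V) (hVne : V.Nonempty) (c : ℝ)
    (w : Euc n → ℝ)
    (hwc : ContinuousOn w (closure V)) (hwl : LocLipOn V w)
    (hwmin : IsAbsMin Ham V w)
    (hbd : ∀ x ∈ frontier V, w x = c) :
    ∀ x ∈ closure V, w x = c := by
  rcases Nat.eq_zero_or_pos n with hn | hn
  · -- n = 0 : the hypotheses are contradictory
    subst hn
    exfalso
    haveI : Subsingleton (Euc 0) := inferInstance
    have hVuniv : V = univ := by
      apply Set.eq_univ_of_forall
      intro x
      obtain ⟨y, hy⟩ := hVne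
      rwa [Subsingleton.elim x y]
    have hfr : frontier V = (∅ : Set (Euc 0)) := by rw [hVuniv, frontier_univ]
    have hcl : closure V ⊆ V := by rw [hVuniv, closure_univ]
    have hμ : volume.restrict V ≠ 0 := by
      rw [Ne, Measure.restrict_eq_zero]
      exact hVo.measure_ne_zero volume hVne
    have hgrad : ∀ (u : Euc 0 → ℝ) (x : Euc 0), Ham (gradient u x) (u x) = - u 0 := by
      intro u x
      rw [Subsingleton.elim x (0 : Euc 0), Ham, Subsingleton.elim (gradient u 0) (0 : Euc 0)]
      simp
    have h := hwmin V hVo hcl (fun _ => w 0 + 1)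
      ⟨0, by exact (LipschitzWith.const (w 0 + 1)).lipschitzOnWith⟩
      (by rw [hfr]; intro x hx; exact absurd hx (notMem_empty x))
    have hL : essSup (fun x => Ham (gradient w x) (w x)) (volume.restrict V) = - w 0 := by
      have heq : (fun x : Euc 0 => Ham (gradient w x) (w x)) = fun _ => - w 0 :=
        funext fun x => hgrad w x
      rw [heq, essSup_const _ hμ]
    have hR : essSup (fun x => Ham (gradient (fun _ : Euc 0 => w 0 + 1) x)
        ((fun _ : Euc 0 => w 0 + 1) x)) (volume.restrict V) = -(w 0 + 1) := by
      have heq : (fun x : Euc 0 => Ham (gradient (fun _ : Euc 0 => w 0 + 1) x)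
          ((fun _ : Euc 0 => w 0 + 1) x)) = fun _ => -(w 0 + 1) :=
        funext fun x => hgrad (fun _ : Euc 0 => w 0 + 1) x
      rw [heq, essSup_const _ hμ]
    rw [hL, hR] at h
    linarith
  · haveI : Nonempty (Fin n) := ⟨⟨0, hn⟩⟩
    haveI : Nontrivial (Euc n) := inferInstance
    have hwV : ContinuousOn w V := hwc.mono subset_closure
    -- Step 1 : minimum principle
    have hmin : ∀ x ∈ V, c ≤ w x := by
      by_contra hcon
      push_neg at hcon
      obtain ⟨x₀, hx₀V, hx₀⟩ := hcon
      set k := (w x₀ + c)/2 with hk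
      have hkc : k < c := by rw [hk]; linarith
      set S := V ∩ w ⁻¹' (Iio k) with hSdef
      have hSo : IsOpen S := hwV.isOpen_inter_preimage hVo isOpen_Iio
      have hclsub : closure S ⊆ closure V ∩ w ⁻¹' (Iic k) := closure_minimal
        (fun x hx => ⟨subset_closure hx.1,
          mem_preimage.mpr (mem_Iic.mpr (le_of_lt (mem_Iio.mp (mem_preimage.mp hx.2))))⟩)
        (hwc.preimage_isClosed_of_isClosed isClosed_closure isClosed_Iic)
      have hScl : closure S ⊆ V := by
        intro x hx
        obtain ⟨hxcl, hxle⟩ := hclsub hx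
        by_contra hxV
        have hxf : x ∈ frontier V := by rw [hVo.frontier_eq]; exact ⟨hxcl, hxV⟩
        have hc := hbd x hxf
        simp only [mem_preimage, mem_Iic] at hxle
        linarith
      have hSne : S.Nonempty := ⟨x₀, hx₀V, by
        simp only [mem_preimage, mem_Iio]
        rw [hk]; linarith⟩
      have hfr : ∀ x ∈ frontier S, w x = k := by
        intro x hx
        rw [hSo.frontier_eq] at hx
        obtain ⟨hxcl, hxS⟩ := hx
        have h1 := (hclsub hxcl).2
        simp only [mem_preimage, mem_Iic] at h1
        have h2 : x ∈ V := hScl hxcl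
        have h3 : ¬ w x < k := fun hlt => hxS ⟨h2, hlt⟩
        linarith
      have hae := core_ae_bound hwl hwc hwmin hSo hScl hSne
        (hVb.subset inter_subset_left) hfr
      have hvol : volume S ≠ 0 := hSo.measure_ne_zero volume hSne
      obtain ⟨x, hxS, hxb⟩ : ∃ x ∈ S, Ham (gradient w x) (w x) ≤ -k := by
        by_contra hcon2
        push_neg at hcon2
        apply hvol
        rw [ae_iff] at hae
        refine measure_mono_null (fun x hxS => ?_) hae
        simp only [mem_setOf_eq, not_forall]
        exact ⟨hxS, not_le.mpr (hcon2 x hxS)⟩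
      rw [Ham] at hxb
      have h0 : (0:ℝ) ≤ (1/2) * ‖gradient w x‖^2 := by positivity
      have hxlt : w x < k := hxS.2
      linarith
    -- Step 2 : a.e. gradient bound on superlevel sets
    have hclaim : ∀ q : ℚ, ∀ᵐ x : Euc n,
        (c < (q:ℝ) ∧ x ∈ V ∩ w ⁻¹' (Ioi (q:ℝ))) → Ham (gradient w x) (w x) ≤ -(q:ℝ) := by
      intro q
      by_cases hq : c < (q:ℝ)
      · set S := V ∩ w ⁻¹' (Ioi (q:ℝ)) with hSdef
        by_cases hSne : S.Nonempty
        · have hSo : IsOpen S := hwV.isOpen_inter_preimage hVo isOpen_Ioi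
          have hclsub : closure S ⊆ closure V ∩ w ⁻¹' (Ici (q:ℝ)) := closure_minimal
            (fun x hx => ⟨subset_closure hx.1,
              mem_preimage.mpr (mem_Ici.mpr (le_of_lt (mem_Ioi.mp (mem_preimage.mp hx.2))))⟩)
            (hwc.preimage_isClosed_of_isClosed isClosed_closure isClosed_Ici)
          have hScl : closure S ⊆ V := by
            intro x hx
            obtain ⟨hxcl, hxge⟩ := hclsub hx
            by_contra hxV
            have hxf : x ∈ frontier V := by rw [hVo.frontier_eq]; exact ⟨hxcl, hxV⟩
            have hc := hbd x hxf
            simp only [mem_preimage, mem_Ici] at hxge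
            linarith
          have hfr : ∀ x ∈ frontier S, w x = (q:ℝ) := by
            intro x hx
            rw [hSo.frontier_eq] at hx
            obtain ⟨hxcl, hxS⟩ := hx
            have h1 := (hclsub hxcl).2
            simp only [mem_preimage, mem_Ici] at h1
            have h2 : x ∈ V := hScl hxcl
            have h3 : ¬ (q:ℝ) < w x := fun hlt => hxS ⟨h2, hlt⟩
            linarith
          have hae := core_ae_bound hwl hwc hwmin hSo hScl hSne
            (hVb.subset inter_subset_left) hfr
          filter_upwards [hae] with x hx h2
          exact hx h2.2
        · filter_upwards with x hx
          exact absurd ⟨x, hx.2⟩ hSne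
      · filter_upwards with x hx
        exact absurd hx.1 hq
    -- Step 3 : gradient vanishes a.e. above level c
    have hgrad0 : ∀ᵐ x : Euc n, (x ∈ V ∧ c < w x) → gradient w x = 0 := by
      filter_upwards [ae_all_iff.mpr hclaim] with x hx
      rintro ⟨hxV, hxc⟩
      have hkey : ∀ ε : ℝ, 0 < ε → (1/2) * ‖gradient w x‖^2 ≤ ε := by
        intro ε hε
        obtain ⟨q, hq1, hq2⟩ := exists_rat_btwn
          (show max c (w x - ε) < w x from max_lt hxc (by linarith))
        have hcq : c < (q:ℝ) := (le_max_left c (w x - ε)).trans_lt hq1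
        have hb := hx q ⟨hcq, hxV, hq2⟩
        rw [Ham] at hb
        have hlow : w x - ε < (q:ℝ) := (le_max_right c (w x - ε)).trans_lt hq1
        linarith
      have hsq : ‖gradient w x‖^2 ≤ 0 := by
        by_contra hpos
        push_neg at hpos
        have := hkey ((1/4) * ‖gradient w x‖^2) (by positivity)
        linarith
      have hzero : ‖gradient w x‖^2 = 0 := le_antisymm hsq (by positivity)
      have : ‖gradient w x‖ = 0 := pow_eq_zero_iff (two_ne_zero) |>.mp hzero
      exact norm_eq_zero.mp this
    -- Step 4 : w is locally constant on U = {x ∈ V | c < w x}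
    set U := V ∩ w ⁻¹' (Ioi c) with hUdef
    have hUopen : IsOpen U := hwV.isOpen_inter_preimage hVo isOpen_Ioi
    have hlc : ∀ x ∈ U, ∃ ε : ℝ, 0 < ε ∧ ball x ε ⊆ U ∧ ∀ y ∈ ball x ε, w y = w x := by
      intro x hxU
      obtain ⟨K, t, htn, hlip⟩ := hwl x hxU.1
      obtain ⟨ε, hε, hball⟩ := Metric.mem_nhds_iff.mp (Filter.inter_mem htn (hUopen.mem_nhds hxU))
      have hlipb : LipschitzOnWith K w (ball x ε) := hlip.mono (hball.trans inter_subset_left)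
      obtain ⟨W, hW, hWeq⟩ := hlipb.extend_real
      have haeW : ∀ᵐ y : Euc n, y ∈ ball x ε → fderiv ℝ W y = 0 := by
        filter_upwards [hgrad0] with y hy hyb
        have hyU : y ∈ U := (hball hyb).2
        have hg := hy ⟨hyU.1, hyU.2⟩
        have hfw : fderiv ℝ w y = 0 := fderiv_eq_zero_of_gradient_eq_zero hg
        have hev : W =ᶠ[nhds y] w := by
          filter_upwards [isOpen_ball.mem_nhds hyb] with z hz
          exact (hWeq hz).symm
        rw [hev.fderiv_eq, hfw]
      have hconst := constOn_of_ae_fderiv_zero hW haeW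
      refine ⟨ε, hε, hball.trans inter_subset_right, fun y hy => ?_⟩
      rw [hWeq hy, hconst y hy, ← hWeq (mem_ball_self hε)]
    -- Step 5 : maximum principle
    have hmax : ∀ x ∈ V, w x ≤ c := by
      by_contra hcon
      push_neg at hcon
      obtain ⟨x₀, hx₀V, hx₀⟩ := hcon
      have hVclcomp : IsCompact (closure V) :=
        isCompact_of_isClosed_isBounded isClosed_closure hVb.closure
      obtain ⟨z, hzcl, hzmax⟩ := hVclcomp.exists_isMaxOn (hVne.mono subset_closure) hwc
      set M := w z with hM
      have hMc : c < M := lt_of_lt_of_le hx₀ (hzmax (subset_closure hx₀V))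
      set T := closure V ∩ w ⁻¹' ({M} : Set ℝ) with hT
      have hTU : T ⊆ U := by
        intro x hx
        have hxM : w x = M := hx.2
        have hxV : x ∈ V := by
          by_contra hxV
          have hxf : x ∈ frontier V := by rw [hVo.frontier_eq]; exact ⟨hx.1, hxV⟩
          have hc := hbd x hxf
          rw [hxM] at hc
          linarith
        exact ⟨hxV, by rw [mem_preimage, mem_Ioi, hxM]; exact hMc⟩
      have hTopen : IsOpen T := by
        rw [Metric.isOpen_iff]
        intro x hx
        obtain ⟨ε, hε, hsubU, hconst⟩ := hlc x (hTU hx)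
        refine ⟨ε, hε, fun y hy => ⟨subset_closure ((hsubU hy).1), ?_⟩⟩
        rw [mem_preimage, mem_singleton_iff, hconst y hy]
        exact hx.2
      have hTclosed : IsClosed T :=
        hwc.preimage_isClosed_of_isClosed isClosed_closure isClosed_singleton
      have hTne : T.Nonempty := ⟨z, hzcl, rfl⟩
      have hTuniv : T = univ := by
        rcases isClopen_iff.mp ⟨hTclosed, hTopen⟩ with h | h
        · rw [h] at hTne
          exact absurd hTne (by simp)
        · exact h
      have hTbnd : Bornology.IsBounded T := hVb.closure.subset inter_subset_left
      rw [hTuniv] at hTbnd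
      obtain ⟨R, hR⟩ := isBounded_iff_forall_norm_le.mp hTbnd
      obtain ⟨y, hy⟩ := exists_norm_eq (Euc n) (show (0:ℝ) ≤ |R| + 1 by positivity)
      have := hR y (mem_univ y)
      rw [hy] at this
      have := le_abs_self R
      linarith
    intro x hxcl
    by_cases hxV : x ∈ V
    · exact le_antisymm (hmax x hxV) (hmin x hxV)
    · exact hbd x (by rw [hVo.frontier_eq]; exact ⟨hxcl, hxV⟩)
end
end

section
/- Let Ω ⊂ ℝⁿ be a bounded nonempty open set and let u ∈ C(closure Ω) be a viscosity solution of Δ∞u − |Du|² = 0 on Ω. Then u is a viscosity solution of the normalized equation Δ∞u/|Du|² = 1 on Ω (i.e. u is the continuum value function with boundary data u|_{∂Ω}) if and only if the graph of u has no flat piece, i.e. u is not constant on any nonempty open subset of Ω. -/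
open Set MeasureTheory

noncomputable section

/-! ### Auxiliary machinery -/

open RealInnerProductSpace

section Aux

variable {n : ℕ}

/-- The squared-distance test function. -/
def qf (y x : Euc n) : ℝ := ⟪x - y, x - y⟫

lemma contDiff_qf (y : Euc n) : ContDiff ℝ 2 (qf y) :=
  ContDiff.inner ℝ (contDiff_id.sub contDiff_const) (contDiff_id.sub contDiff_const)

lemma hasFDerivAt_qf (y z : Euc n) :
    HasFDerivAt (qf y) ((2:ℝ) • (innerSL ℝ (z - y))) z := by
  have h := HasFDerivAt.inner ℝ (f := fun x : Euc n => x - y) (g := fun x : Euc n => x - y)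
    ((hasFDerivAt_id z).sub_const y) ((hasFDerivAt_id z).sub_const y)
  refine h.congr_fderiv ?_
  ext w
  simp only [ContinuousLinearMap.coe_comp', Function.comp_apply, ContinuousLinearMap.prod_apply,
    ContinuousLinearMap.id_apply, fderivInnerCLM_apply, ContinuousLinearMap.smul_apply,
    innerSL_apply_apply, smul_eq_mul]
  rw [real_inner_comm w (z - y)]
  ring

lemma fderiv_qf (y : Euc n) :
    fderiv ℝ (qf y) = fun z => (2:ℝ) • (innerSL ℝ (z - y)) :=
  funext fun z => (hasFDerivAt_qf y z).fderiv

lemma D2_qf (y z p q : Euc n) : D2 (qf y) z p q = 2 * ⟪p, q⟫ := by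
  rw [D2, iteratedFDeriv_two_apply, fderiv_qf]
  have : HasFDerivAt (fun z : Euc n => (2:ℝ) • (innerSL ℝ (z - y)))
      ((2:ℝ) • (innerSL ℝ (E := Euc n))) z := by
    have h2 : HasFDerivAt (fun z : Euc n => innerSL ℝ (E := Euc n) (z - y))
        (innerSL ℝ (E := Euc n)) z := by
      have h := ((innerSL ℝ (E := Euc n)).hasFDerivAt (x := z - y)).comp z
        ((hasFDerivAt_id z).sub_const y)
      exact h
    exact h2.const_smul (2:ℝ)
  rw [this.fderiv]
  simp [smul_eq_mul]
  rw [innerSL_apply_apply]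

lemma contDiff_psi (c : ℝ) (y : Euc n) : ContDiff ℝ 2 (fun x => c * qf y x) :=
  contDiff_const.mul (contDiff_qf y)

lemma gradient_psi (c : ℝ) (y z : Euc n) :
    gradient (fun x => c * qf y x) z = (2 * c) • (z - y) := by
  have h : HasGradientAt (fun x => c * qf y x) ((2 * c) • (z - y)) z := by
    rw [hasGradientAt_iff_hasFDerivAt]
    refine ((hasFDerivAt_qf y z).const_mul c).congr_fderiv ?_
    ext w
    simp only [ContinuousLinearMap.smul_apply, innerSL_apply_apply, smul_eq_mul,
      InnerProductSpace.toDual_apply_apply, real_inner_smul_left]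
    ring
  exact h.gradient

lemma D2_psi (c : ℝ) (y z p q : Euc n) : D2 (fun x => c * qf y x) z p q = 2 * c * ⟪p, q⟫ := by
  have h : (fun x => c * qf y x) = c • (qf y) := by
    funext x; simp [smul_eq_mul]
  rw [D2, h, iteratedFDeriv_const_smul_apply ((contDiff_qf y).of_le (by norm_num)).contDiffAt]
  have := D2_qf y z p q
  rw [D2] at this
  simp only [ContinuousMultilinearMap.smul_apply, this, smul_eq_mul]
  ring

lemma D2_smul_smul (φ : Euc n → ℝ) (x p q : Euc n) (s t : ℝ) :
    D2 φ x (s • p) (t • q) = s * t * D2 φ x p q := by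
  have h0 : ∀ a b : Euc n, (![a, b] : Fin 2 → Euc n) = Function.update ![a, b] 0 a := by
    intro a b; ext i; fin_cases i <;> simp
  have h1 : ∀ a b : Euc n, (![a, b] : Fin 2 → Euc n) = Function.update ![a, b] 1 b := by
    intro a b; ext i; fin_cases i <;> simp
  unfold D2
  have e0 : (![s • p, t • q] : Fin 2 → Euc n) = Function.update ![p, t • q] 0 (s • p) := by
    ext i; fin_cases i <;> simp
  have e1 : (![p, t • q] : Fin 2 → Euc n) = Function.update ![p, q] 1 (t • q) := by
    ext i; fin_cases i <;> simp
  rw [e0, (iteratedFDeriv ℝ 2 φ x).map_update_smul, ← h0, e1,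
    (iteratedFDeriv ℝ 2 φ x).map_update_smul, ← h1]
  simp [smul_eq_mul]; ring

lemma D2_le_of_sphere (φ : Euc n → ℝ) (x : Euc n) (κ : ℝ) (hκ : 0 ≤ κ)
    (h : ∀ p : Euc n, ‖p‖ = 1 → D2 φ x p p ≤ κ) :
    ∀ v : Euc n, D2 φ x v v ≤ κ * ‖v‖ ^ 2 := by
  intro v
  rcases eq_or_ne v 0 with rfl | hv
  · have : D2 φ x ((0:ℝ) • (0:Euc n)) ((0:ℝ) • (0:Euc n)) = 0 := by
      rw [D2_smul_smul]; ring
    simpa using this.le.trans (by positivity)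
  · have hp : ‖(‖v‖⁻¹ • v : Euc n)‖ = 1 := by
      rw [norm_smul]; simp [norm_ne_zero_iff.2 hv]
    have hv' : v = ‖v‖ • (‖v‖⁻¹ • v) := by
      rw [smul_smul, mul_inv_cancel₀ (norm_ne_zero_iff.2 hv), one_smul]
    calc D2 φ x v v = ‖v‖ * ‖v‖ * D2 φ x (‖v‖⁻¹ • v) (‖v‖⁻¹ • v) := by
          conv_lhs => rw [hv', D2_smul_smul]
      _ ≤ ‖v‖ * ‖v‖ * κ := by
          apply mul_le_mul_of_nonneg_left (h _ hp) (by positivity)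
      _ = κ * ‖v‖ ^ 2 := by ring

lemma D2_ge_of_sphere (φ : Euc n → ℝ) (x : Euc n) (κ : ℝ)
    (h : ∀ p : Euc n, ‖p‖ = 1 → κ ≤ D2 φ x p p) :
    ∀ v : Euc n, v ≠ 0 → κ * ‖v‖ ^ 2 ≤ D2 φ x v v := by
  intro v hv
  have hp : ‖(‖v‖⁻¹ • v : Euc n)‖ = 1 := by
    rw [norm_smul]; simp [norm_ne_zero_iff.2 hv]
  have hv' : v = ‖v‖ • (‖v‖⁻¹ • v) := by
    rw [smul_smul, mul_inv_cancel₀ (norm_ne_zero_iff.2 hv), one_smul]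
  calc κ * ‖v‖ ^ 2 = ‖v‖ * ‖v‖ * κ := by ring
    _ ≤ ‖v‖ * ‖v‖ * D2 φ x (‖v‖⁻¹ • v) (‖v‖⁻¹ • v) :=
        mul_le_mul_of_nonneg_left (h _ hp) (by positivity)
    _ = D2 φ x v v := by conv_rhs => rw [hv', D2_smul_smul]

lemma exists_ball_D2_le (φ : Euc n → ℝ) (hφ : ContDiff ℝ 2 φ) (x₀ : Euc n) (κ ε : ℝ)
    (h : ∀ v : Euc n, D2 φ x₀ v v ≤ κ * ‖v‖ ^ 2) (hε : 0 < ε) :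
    ∃ σ > 0, ∀ x ∈ Metric.closedBall x₀ σ, ∀ v : Euc n, D2 φ x v v ≤ (κ + ε) * ‖v‖ ^ 2 := by
  have hc : Continuous (iteratedFDeriv ℝ 2 φ) := hφ.continuous_iteratedFDeriv (by norm_num)
  obtain ⟨δ, hδ, hball⟩ := Metric.continuousAt_iff.1 (hc.continuousAt (x := x₀)) ε hε
  refine ⟨δ/2, by positivity, fun x hx v => ?_⟩
  have hdist : dist (iteratedFDeriv ℝ 2 φ x) (iteratedFDeriv ℝ 2 φ x₀) < ε := by
    apply hball
    calc dist x x₀ ≤ δ/2 := hx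
      _ < δ := by linarith
  have key : D2 φ x v v - D2 φ x₀ v v ≤ ε * (‖v‖ * ‖v‖) := by
    have h1 : D2 φ x v v - D2 φ x₀ v v
        = (iteratedFDeriv ℝ 2 φ x - iteratedFDeriv ℝ 2 φ x₀) ![v, v] := by
      simp [D2, ContinuousMultilinearMap.sub_apply]
    have h2 := (iteratedFDeriv ℝ 2 φ x - iteratedFDeriv ℝ 2 φ x₀).le_opNorm ![v, v]
    have h3 : (∏ i, ‖(![v, v] : Fin 2 → Euc n) i‖) = ‖v‖ * ‖v‖ := by
      rw [Fin.prod_univ_two]; simp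
    rw [h3] at h2
    have h4 : ‖iteratedFDeriv ℝ 2 φ x - iteratedFDeriv ℝ 2 φ x₀‖ ≤ ε := by
      rw [← dist_eq_norm] at *; exact hdist.le
    rw [h1]
    calc (iteratedFDeriv ℝ 2 φ x - iteratedFDeriv ℝ 2 φ x₀) ![v, v]
        ≤ ‖(iteratedFDeriv ℝ 2 φ x - iteratedFDeriv ℝ 2 φ x₀) ![v, v]‖ := le_abs_self _
      _ ≤ ‖iteratedFDeriv ℝ 2 φ x - iteratedFDeriv ℝ 2 φ x₀‖ * (‖v‖ * ‖v‖) := h2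
      _ ≤ ε * (‖v‖ * ‖v‖) := by
          apply mul_le_mul_of_nonneg_right h4 (by positivity)
  have := h v
  nlinarith [key, this, sq_nonneg ‖v‖]

lemma exists_ball_D2_ge (φ : Euc n → ℝ) (hφ : ContDiff ℝ 2 φ) (x₀ : Euc n) (κ ε : ℝ)
    (h : ∀ v : Euc n, v ≠ 0 → κ * ‖v‖ ^ 2 ≤ D2 φ x₀ v v) (hε : 0 < ε) :
    ∃ σ > 0, ∀ x ∈ Metric.closedBall x₀ σ, ∀ v : Euc n,
      v ≠ 0 → (κ - ε) * ‖v‖ ^ 2 ≤ D2 φ x v v := by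
  have hc : Continuous (iteratedFDeriv ℝ 2 φ) := hφ.continuous_iteratedFDeriv (by norm_num)
  obtain ⟨δ, hδ, hball⟩ := Metric.continuousAt_iff.1 (hc.continuousAt (x := x₀)) ε hε
  refine ⟨δ/2, by positivity, fun x hx v hv => ?_⟩
  have hdist : dist (iteratedFDeriv ℝ 2 φ x) (iteratedFDeriv ℝ 2 φ x₀) < ε := by
    apply hball
    calc dist x x₀ ≤ δ/2 := hx
      _ < δ := by linarith
  have key : D2 φ x₀ v v - D2 φ x v v ≤ ε * (‖v‖ * ‖v‖) := by
    have h1 : D2 φ x₀ v v - D2 φ x v v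
        = (iteratedFDeriv ℝ 2 φ x₀ - iteratedFDeriv ℝ 2 φ x) ![v, v] := by
      simp [D2, ContinuousMultilinearMap.sub_apply]
    have h2 := (iteratedFDeriv ℝ 2 φ x₀ - iteratedFDeriv ℝ 2 φ x).le_opNorm ![v, v]
    have h3 : (∏ i, ‖(![v, v] : Fin 2 → Euc n) i‖) = ‖v‖ * ‖v‖ := by
      rw [Fin.prod_univ_two]; simp
    rw [h3] at h2
    have h4 : ‖iteratedFDeriv ℝ 2 φ x₀ - iteratedFDeriv ℝ 2 φ x‖ ≤ ε := by
      rw [dist_comm, ← dist_eq_norm] at *; exact hdist.le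
    rw [h1]
    calc (iteratedFDeriv ℝ 2 φ x₀ - iteratedFDeriv ℝ 2 φ x) ![v, v]
        ≤ ‖(iteratedFDeriv ℝ 2 φ x₀ - iteratedFDeriv ℝ 2 φ x) ![v, v]‖ := le_abs_self _
      _ ≤ ‖iteratedFDeriv ℝ 2 φ x₀ - iteratedFDeriv ℝ 2 φ x‖ * (‖v‖ * ‖v‖) := h2
      _ ≤ ε * (‖v‖ * ‖v‖) := by
          apply mul_le_mul_of_nonneg_right h4 (by positivity)
  have := h v hv
  nlinarith [key, this, sq_nonneg ‖v‖]

lemma taylor_upper (φ : Euc n → ℝ) (hφ : ContDiff ℝ 2 φ) (x₀ : Euc n)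
    (hgrad : fderiv ℝ φ x₀ = 0) (κ σ : ℝ)
    (hbound : ∀ x ∈ Metric.closedBall x₀ σ, ∀ v : Euc n, D2 φ x v v ≤ κ * ‖v‖ ^ 2) :
    ∀ x ∈ Metric.closedBall x₀ σ, φ x ≤ φ x₀ + κ / 2 * ‖x - x₀‖ ^ 2 := by
  intro x hx
  set v := x - x₀ with hv
  have hvσ : ‖v‖ ≤ σ := by
    rw [hv]; rwa [Metric.mem_closedBall, dist_eq_norm] at hx
  have hline : ∀ t : ℝ, HasDerivAt (fun t : ℝ => x₀ + t • v) v t := by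
    intro t
    simpa using ((hasDerivAt_id t).smul_const v).const_add x₀
  have hmem : ∀ t ∈ Icc (0:ℝ) 1, x₀ + t • v ∈ Metric.closedBall x₀ σ := by
    intro t ht
    rw [Metric.mem_closedBall, dist_eq_norm]
    have : ‖x₀ + t • v - x₀‖ = |t| * ‖v‖ := by simp [norm_smul, Real.norm_eq_abs]
    rw [this, abs_of_nonneg ht.1]
    calc t * ‖v‖ ≤ 1 * ‖v‖ := mul_le_mul_of_nonneg_right ht.2 (norm_nonneg v)
      _ ≤ σ := by simpa using hvσ
  have hdiff : Differentiable ℝ φ := hφ.differentiable (by norm_num)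
  have hfd : ContDiff ℝ 1 (fderiv ℝ φ) := hφ.fderiv_right (by norm_num)
  set g₁ : ℝ → ℝ := fun t => fderiv ℝ φ (x₀ + t • v) v with hg₁def
  have hg : ∀ t : ℝ, HasDerivAt (fun t : ℝ => φ (x₀ + t • v)) (g₁ t) t := by
    intro t
    exact (hdiff (x₀ + t • v)).hasFDerivAt.comp_hasDerivAt t (hline t)
  have hg₁ : ∀ t : ℝ, HasDerivAt g₁ (D2 φ (x₀ + t • v) v v) t := by
    intro t
    have h1 : HasDerivAt (fun t : ℝ => fderiv ℝ φ (x₀ + t • v))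
        (fderiv ℝ (fderiv ℝ φ) (x₀ + t • v) v) t :=
      ((hfd.differentiable (by norm_num)) (x₀ + t • v)).hasFDerivAt.comp_hasDerivAt t (hline t)
    have h2 := (ContinuousLinearMap.apply ℝ ℝ v).hasFDerivAt.comp_hasDerivAt t h1
    have h3 : D2 φ (x₀ + t • v) v v = fderiv ℝ (fderiv ℝ φ) (x₀ + t • v) v v := by
      rw [D2, iteratedFDeriv_two_apply]; simp
    rw [h3]
    exact h2
  set w : ℝ → ℝ := fun t => φ (x₀ + t • v) - κ * ‖v‖ ^ 2 * t ^ 2 / 2 with hwdef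
  set w₁ : ℝ → ℝ := fun t => g₁ t - κ * ‖v‖ ^ 2 * t with hw₁def
  have hw : ∀ t : ℝ, HasDerivAt w (w₁ t) t := by
    intro t
    have h2 : HasDerivAt (fun t : ℝ => κ * ‖v‖ ^ 2 * t ^ 2 / 2) (κ * ‖v‖ ^ 2 * t) t := by
      have := ((hasDerivAt_pow 2 t).const_mul (κ * ‖v‖ ^ 2)).div_const 2
      refine this.congr_deriv ?_
      norm_num; ring
    exact (hg t).sub h2
  have hw₁ : ∀ t : ℝ, HasDerivAt w₁ (D2 φ (x₀ + t • v) v v - κ * ‖v‖ ^ 2) t := by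
    intro t
    have h2 : HasDerivAt (fun t : ℝ => κ * ‖v‖ ^ 2 * t) (κ * ‖v‖ ^ 2) t := by
      simpa using (hasDerivAt_id t).const_mul (κ * ‖v‖ ^ 2)
    exact (hg₁ t).sub h2
  have hanti₁ : AntitoneOn w₁ (Icc 0 1) := by
    apply antitoneOn_of_deriv_nonpos (convex_Icc 0 1)
    · exact fun t _ => (hw₁ t).continuousAt.continuousWithinAt
    · exact fun t _ => (hw₁ t).differentiableAt.differentiableWithinAt
    · intro t ht
      rw [interior_Icc] at ht
      rw [(hw₁ t).deriv]
      have := hbound _ (hmem t ⟨ht.1.le, ht.2.le⟩) v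
      linarith
  have hw₁0 : w₁ 0 = 0 := by
    simp [hw₁def, hg₁def, hgrad]
  have hw₁nonpos : ∀ t ∈ Icc (0:ℝ) 1, w₁ t ≤ 0 := by
    intro t ht
    have := hanti₁ (left_mem_Icc.2 zero_le_one) ht ht.1
    rwa [hw₁0] at this
  have hanti : AntitoneOn w (Icc 0 1) := by
    apply antitoneOn_of_deriv_nonpos (convex_Icc 0 1)
    · exact fun t _ => (hw t).continuousAt.continuousWithinAt
    · exact fun t _ => (hw t).differentiableAt.differentiableWithinAt
    · intro t ht
      rw [interior_Icc] at ht
      rw [(hw t).deriv]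
      exact hw₁nonpos t ⟨ht.1.le, ht.2.le⟩
  have := hanti (left_mem_Icc.2 zero_le_one) (right_mem_Icc.2 zero_le_one) zero_le_one
  simp only [hwdef] at this
  have h0 : x₀ + (0:ℝ) • v = x₀ := by simp
  have h1 : x₀ + (1:ℝ) • v = x := by simp [hv]
  rw [h0, h1] at this
  simp at this
  linarith

lemma D2_neg (φ : Euc n → ℝ) (x p q : Euc n) : D2 (fun y => -φ y) x p q = -D2 φ x p q := by
  have : (fun y => -φ y) = -φ := rfl
  rw [D2, D2, this, iteratedFDeriv_neg_apply]
  simp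

lemma taylor_lower (φ : Euc n → ℝ) (hφ : ContDiff ℝ 2 φ) (x₀ : Euc n)
    (hgrad : fderiv ℝ φ x₀ = 0) (κ σ : ℝ)
    (hbound : ∀ x ∈ Metric.closedBall x₀ σ, ∀ v : Euc n, κ * ‖v‖ ^ 2 ≤ D2 φ x v v) :
    ∀ x ∈ Metric.closedBall x₀ σ, φ x₀ + κ / 2 * ‖x - x₀‖ ^ 2 ≤ φ x := by
  intro x hx
  have hneg : fderiv ℝ (fun y => -φ y) x₀ = 0 := by
    rw [fderiv_fun_neg, hgrad]; simp
  have h := taylor_upper (fun y => -φ y) hφ.neg x₀ hneg (-κ) σ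
    (fun x hx v => by rw [D2_neg]; have := hbound x hx v; linarith) x hx
  linarith

lemma const_of_quad (C : ℝ) (s : Set (Euc n)) (hs : Convex ℝ s) (f : Euc n → ℝ)
    (h : ∀ x ∈ s, ∀ y ∈ s, f x - f y ≤ C * ‖x - y‖ ^ 2) :
    ∀ x ∈ s, ∀ y ∈ s, f x = f y := by
  intro x hx y hy
  have key : ∀ k : ℕ, 1 ≤ k → |f x - f y| ≤ C * ‖x - y‖ ^ 2 / k := by
    intro k hk
    set p : ℕ → Euc n := fun i => y + ((i : ℝ) / k) • (x - y) with hp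
    have hmem : ∀ i : ℕ, i ≤ k → p i ∈ s := by
      intro i hi
      have h1 : (0:ℝ) ≤ (i:ℝ)/k := by positivity
      have h2 : (i:ℝ)/k ≤ 1 := by
        rw [div_le_one (by exact_mod_cast hk)]
        exact_mod_cast hi
      have : p i = (1 - (i:ℝ)/k) • y + ((i:ℝ)/k) • x := by
        rw [hp]; simp only; module
      rw [this]
      exact hs hy hx (by linarith) h1 (by ring)
    have hstep : ∀ i : ℕ, i < k → |f (p (i+1)) - f (p i)| ≤ C * (‖x - y‖ / k) ^ 2 := by
      intro i hi
      have hd : p (i+1) - p i = ((1:ℝ)/k) • (x - y) := by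
        rw [hp]; simp only
        push_cast
        module
      have hnorm : ‖p (i+1) - p i‖ = ‖x - y‖ / k := by
        rw [hd, norm_smul, Real.norm_eq_abs, abs_of_nonneg (by positivity : (0:ℝ) ≤ 1/(k:ℝ))]
        ring
      have m1 : p (i+1) ∈ s := hmem _ hi
      have m2 : p i ∈ s := hmem _ hi.le
      have b1 := h _ m1 _ m2
      have b2 := h _ m2 _ m1
      rw [abs_le]
      constructor
      · have : ‖p i - p (i+1)‖ = ‖x - y‖ / k := by
          rw [← norm_neg]; simp only [neg_sub]; exact hnorm
        rw [this] at b2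
        linarith [b2]
      · rw [hnorm] at b1; linarith [b1]
    have htel : f x - f y = ∑ i ∈ Finset.range k, (f (p (i+1)) - f (p i)) := by
      rw [Finset.sum_range_sub (fun i => f (p i))]
      have hk' : p k = x := by
        rw [hp]; simp only
        rw [div_self (by positivity : (k:ℝ) ≠ 0)]
        simp
      have h0 : p 0 = y := by rw [hp]; simp
      rw [hk', h0]
    calc |f x - f y| = |∑ i ∈ Finset.range k, (f (p (i+1)) - f (p i))| := by rw [htel]
      _ ≤ ∑ i ∈ Finset.range k, |f (p (i+1)) - f (p i)| := Finset.abs_sum_le_sum_abs _ _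
      _ ≤ ∑ _i ∈ Finset.range k, C * (‖x - y‖ / k) ^ 2 := by
          apply Finset.sum_le_sum
          intro i hi
          exact hstep i (Finset.mem_range.1 hi)
      _ = k * (C * (‖x - y‖ / k) ^ 2) := by rw [Finset.sum_const]; simp [mul_comm]
      _ = C * ‖x - y‖ ^ 2 / k := by
          field_simp
  by_contra hne
  have hpos : 0 < |f x - f y| := abs_pos.2 (sub_ne_zero.2 hne)
  have hCnn : 0 ≤ C * ‖x - y‖ ^ 2 := by
    by_contra hC
    push_neg at hC
    have := key 1 le_rfl
    simp at this
    linarith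
  obtain ⟨k, hk⟩ := exists_nat_gt (C * ‖x - y‖ ^ 2 / |f x - f y|)
  have hk1 : 1 ≤ k := by
    by_contra hk1
    push_neg at hk1
    interval_cases k
    · simp at hk
      have : (0:ℝ) ≤ C * ‖x - y‖ ^ 2 / |f x - f y| := div_nonneg hCnn hpos.le
      linarith
  have := key k hk1
  have hkpos : (0:ℝ) < k := by exact_mod_cast hk1
  rw [div_lt_iff₀ hpos] at hk
  rw [le_div_iff₀ hkpos] at this
  nlinarith

set_option maxHeartbeats 1000000 in
lemma subsol_flat (Ω : Set (Euc n)) (u : Euc n → ℝ) (hΩo : IsOpen Ω)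
    (huc : ContinuousOn u (closure Ω)) (hsub : IsSubsol Ω u) (x₀ : Euc n) (ρ a b : ℝ)
    (hρ : 0 < ρ) (hball : Metric.closedBall x₀ ρ ⊆ Ω)
    (ha : 0 < a) (hab : a < b) (hb : b < 1)
    (hupper : ∀ x ∈ Metric.closedBall x₀ ρ, u x ≤ u x₀ + a / 2 * ‖x - x₀‖ ^ 2) :
    ∃ τ > 0, ∀ x ∈ Metric.ball x₀ τ, u x = u x₀ := by
  have hb0 : 0 < b := lt_trans ha hab
  obtain ⟨τ, hτ, hτρ, hτeq⟩ : ∃ τ, 0 < τ ∧ τ ≤ ρ ∧ 2 * b * ρ * τ = (b - a) * ρ ^ 2 / 2 := by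
    refine ⟨(b - a) * ρ / (4 * b), div_pos (mul_pos (by linarith) hρ) (by positivity), ?_, ?_⟩
    · rw [div_le_iff₀ (by positivity)]
      nlinarith
    · field_simp
      ring
  have hKc : IsCompact (Metric.closedBall x₀ ρ) := isCompact_closedBall x₀ ρ
  have hKne : (Metric.closedBall x₀ ρ).Nonempty := ⟨x₀, Metric.mem_closedBall_self hρ.le⟩
  have hucK : ContinuousOn u (Metric.closedBall x₀ ρ) := huc.mono (hball.trans subset_closure)
  have key : ∀ y ∈ Metric.closedBall x₀ τ, ∀ x ∈ Metric.closedBall x₀ ρ,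
      u x ≤ u y + b / 2 * ‖x - y‖ ^ 2 := by
    intro y hy x hx
    have hψval : ∀ w : Euc n, (b / 2) * qf y w = b / 2 * ‖w - y‖ ^ 2 := by
      intro w; simp only [qf, real_inner_self_eq_norm_sq]
    have hFcont : ContinuousOn (fun x => u x - (b / 2) * qf y x) (Metric.closedBall x₀ ρ) :=
      hucK.sub ((contDiff_psi (b / 2) y).continuous.continuousOn)
    obtain ⟨z, hzK, hzmax⟩ := hKc.exists_isMaxOn hKne hFcont
    have hyx₀ : ‖y - x₀‖ ≤ τ := by rwa [Metric.mem_closedBall, dist_eq_norm] at hy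
    have hzlt : ‖z - x₀‖ < ρ := by
      have hzρ : ‖z - x₀‖ ≤ ρ := by rwa [Metric.mem_closedBall, dist_eq_norm] at hzK
      rcases lt_or_eq_of_le hzρ with h | h
      · exact h
      · exfalso
        have h1 : u x₀ - (b / 2) * qf y x₀ ≤ u z - (b / 2) * qf y z :=
          hzmax (Metric.mem_closedBall_self hρ.le)
        have h2 : u z ≤ u x₀ + a / 2 * ρ ^ 2 := by
          have := hupper z hzK
          rw [h] at this; exact this
        have h3 : ρ - τ ≤ ‖z - y‖ := by
          have htri : ‖z - x₀‖ ≤ ‖z - y‖ + ‖y - x₀‖ := by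
            have := dist_triangle z y x₀
            simpa [dist_eq_norm] using this
          rw [h] at htri
          linarith
        have h5 : (ρ - τ) ^ 2 ≤ ‖z - y‖ ^ 2 := by
          have hρτ : 0 ≤ ρ - τ := by linarith
          nlinarith [h3, hρτ]
        have h6 : (b / 2) * qf y x₀ ≤ b / 2 * τ ^ 2 := by
          rw [hψval]
          have h6' : ‖x₀ - y‖ ≤ τ := by rwa [norm_sub_rev]
          have h6'' := mul_self_le_mul_self (norm_nonneg (x₀ - y)) h6'
          nlinarith [h6'', hb0]
        have h7 : b / 2 * (ρ - τ) ^ 2 ≤ (b / 2) * qf y z := by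
          rw [hψval]
          exact mul_le_mul_of_nonneg_left h5 (by positivity)
        have hA : b / 2 * (ρ - τ) ^ 2 ≤ a / 2 * ρ ^ 2 + b / 2 * τ ^ 2 := by linarith
        nlinarith [hA, hτeq, mul_pos hρ hρ]
    have hzΩ : z ∈ Ω := hball hzK
    have hzball : z ∈ Metric.ball x₀ ρ := by
      rw [Metric.mem_ball, dist_eq_norm]; exact hzlt
    have hloc : IsLocalMaxOn (fun x => u x - (b / 2) * qf y x) Ω z := by
      have hmem : Metric.ball x₀ ρ ∈ nhdsWithin z Ω :=
        mem_nhdsWithin_of_mem_nhds (Metric.isOpen_ball.mem_nhds hzball)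
      filter_upwards [hmem] with w hw
      exact hzmax (Metric.ball_subset_closedBall hw)
    have hsubz := hsub (fun x => (b / 2) * qf y x) (contDiff_psi (b / 2) y) z hzΩ hloc
    rw [gradient_psi, D2_psi] at hsubz
    set g : Euc n := (2 * (b / 2)) • (z - y) with hgdef
    rw [real_inner_self_eq_norm_sq] at hsubz
    have hzy : z = y := by
      have h9 : ‖g‖ ^ 2 ≤ 0 := by nlinarith [hsubz]
      have h10 : g = 0 := by
        have h11 : ‖g‖ = 0 := by nlinarith [norm_nonneg g, sq_nonneg ‖g‖]
        exact norm_eq_zero.1 h11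
      rw [hgdef] at h10
      have hb2 : (2 * (b / 2)) ≠ 0 := by positivity
      exact sub_eq_zero.1 ((smul_eq_zero.1 h10).resolve_left hb2)
    have hfin : u x - (b / 2) * qf y x ≤ u z - (b / 2) * qf y z := hzmax hx
    rw [hzy] at hfin
    have hψy : (b / 2) * qf y y = 0 := by
      simp [qf]
    rw [hψy, hψval] at hfin
    linarith
  have hconst := const_of_quad (b / 2) (Metric.closedBall x₀ τ) (convex_closedBall x₀ τ) u
    (fun x hx y hy => by
      have hxK : x ∈ Metric.closedBall x₀ ρ := Metric.closedBall_subset_closedBall hτρ hx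
      have := key y hy x hxK
      linarith)
  exact ⟨τ, hτ, fun x hx => hconst x (Metric.ball_subset_closedBall hx) x₀
    (Metric.mem_closedBall_self hτ.le)⟩

set_option maxHeartbeats 1000000 in
lemma supersol_no_steep_min (Ω : Set (Euc n)) (u : Euc n → ℝ)
    (huc : ContinuousOn u (closure Ω)) (hsup : IsSupersol Ω u) (y₀ : Euc n) (ρ bl bh : ℝ)
    (hρ : 0 < ρ) (hball : Metric.closedBall y₀ ρ ⊆ Ω) (h1 : 1 < bl) (hlh : bl < bh)
    (hlower : ∀ x ∈ Metric.closedBall y₀ ρ, u y₀ + bh / 2 * ‖x - y₀‖ ^ 2 ≤ u x)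
    (e : Euc n) (he : ‖e‖ = 1) : False := by
  have hbl0 : 0 < bl := by linarith
  obtain ⟨t, ht0, htρ, htkey⟩ : ∃ t, 0 < t ∧ t ≤ ρ ∧ 2 * bl * ρ * t < (bh - bl) * ρ ^ 2 := by
    refine ⟨min ((bh - bl) * ρ / (4 * bl)) ρ, lt_min (div_pos (mul_pos (by linarith) hρ)
      (by positivity)) hρ, min_le_right _ _, ?_⟩
    have hmin : min ((bh - bl) * ρ / (4 * bl)) ρ ≤ (bh - bl) * ρ / (4 * bl) := min_le_left _ _
    have h2 : 2 * bl * ρ * ((bh - bl) * ρ / (4 * bl)) = (bh - bl) * ρ ^ 2 / 2 := by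
      field_simp; ring
    have h3 : 2 * bl * ρ * min ((bh - bl) * ρ / (4 * bl)) ρ ≤ (bh - bl) * ρ ^ 2 / 2 := by
      rw [← h2]
      exact mul_le_mul_of_nonneg_left hmin (by positivity)
    nlinarith [mul_pos hρ hρ]
  set y : Euc n := y₀ + t • e with hydef
  have hyd : ‖y - y₀‖ = t := by
    rw [hydef]
    simp [norm_smul, abs_of_pos ht0, he]
  have hyK : y ∈ Metric.closedBall y₀ ρ := by
    rw [Metric.mem_closedBall, dist_eq_norm, hyd]; exact htρ
  have hKc : IsCompact (Metric.closedBall y₀ ρ) := isCompact_closedBall y₀ ρ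
  have hKne : (Metric.closedBall y₀ ρ).Nonempty := ⟨y₀, Metric.mem_closedBall_self hρ.le⟩
  have hGcont : ContinuousOn (fun x => u x - (bl / 2) * qf y x) (Metric.closedBall y₀ ρ) :=
    (huc.mono (hball.trans subset_closure)).sub
      ((contDiff_psi (bl / 2) y).continuous.continuousOn)
  obtain ⟨z, hzK, hzmin⟩ := hKc.exists_isMinOn hKne hGcont
  have hψval : ∀ w : Euc n, (bl / 2) * qf y w = bl / 2 * ‖w - y‖ ^ 2 := by
    intro w; simp only [qf, real_inner_self_eq_norm_sq]
  have hzy₀ : u z - (bl / 2) * qf y z ≤ u y₀ - bl / 2 * t ^ 2 := by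
    have h0 : u z - (bl / 2) * qf y z ≤ u y₀ - (bl / 2) * qf y y₀ :=
      hzmin (Metric.mem_closedBall_self hρ.le)
    have h1' : (bl / 2) * qf y y₀ = bl / 2 * t ^ 2 := by
      rw [hψval, norm_sub_rev, hyd]
    linarith [h0, h1'.ge, h1'.le]
  have hzlt : ‖z - y₀‖ < ρ := by
    have hzρ : ‖z - y₀‖ ≤ ρ := by rwa [Metric.mem_closedBall, dist_eq_norm] at hzK
    rcases lt_or_eq_of_le hzρ with h | h
    · exact h
    · exfalso
      have hlz := hlower z hzK
      rw [h] at hlz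
      have htri : ‖z - y‖ ≤ ρ + t := by
        calc ‖z - y‖ ≤ ‖z - y₀‖ + ‖y₀ - y‖ := by
              have := dist_triangle z y₀ y
              simpa [dist_eq_norm] using this
          _ = ρ + t := by rw [h, norm_sub_rev, hyd]
      have hsq : ‖z - y‖ ^ 2 ≤ (ρ + t) ^ 2 := by
        nlinarith [norm_nonneg (z - y), htri]
      have hqz : (bl / 2) * qf y z ≤ bl / 2 * (ρ + t) ^ 2 := by
        rw [hψval]
        exact mul_le_mul_of_nonneg_left hsq (by positivity)
      nlinarith [hzy₀, hlz, hqz, htkey]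
  have hzΩ : z ∈ Ω := hball hzK
  have hzball : z ∈ Metric.ball y₀ ρ := by
    rw [Metric.mem_ball, dist_eq_norm]; exact hzlt
  have hloc : IsLocalMinOn (fun x => u x - (bl / 2) * qf y x) Ω z := by
    have hmem : Metric.ball y₀ ρ ∈ nhdsWithin z Ω :=
      mem_nhdsWithin_of_mem_nhds (Metric.isOpen_ball.mem_nhds hzball)
    filter_upwards [hmem] with w hw
    exact hzmin (Metric.ball_subset_closedBall hw)
  have hsupz := hsup (fun x => (bl / 2) * qf y x) (contDiff_psi (bl / 2) y) z hzΩ hloc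
  rw [gradient_psi, D2_psi, real_inner_self_eq_norm_sq] at hsupz
  set g : Euc n := (2 * (bl / 2)) • (z - y) with hgdef
  have hzy : z = y := by
    have h9 : ‖g‖ ^ 2 ≤ 0 := by nlinarith [hsupz]
    have h11 : ‖g‖ = 0 := by nlinarith [norm_nonneg g]
    have h10 : g = 0 := norm_eq_zero.1 h11
    rw [hgdef] at h10
    have hb2 : (2 * (bl / 2)) ≠ 0 := by positivity
    exact sub_eq_zero.1 ((smul_eq_zero.1 h10).resolve_left hb2)
  have hly := hlower y hyK
  rw [hyd] at hly
  rw [hzy] at hzy₀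
  have hqyy : (bl / 2) * qf y y = 0 := by simp [qf]
  rw [hqyy] at hzy₀
  nlinarith [hly, hzy₀, ht0, mul_pos ht0 ht0]

end Aux


/-- Theorem 3.1 (ii): a viscosity solution of `Δ∞u - |Du|² = 0` is a
viscosity solution of the normalized equation `Δ∞u/|Du|² = 1` (i.e. the continuum value
function with its own boundary data) if and only if its graph has no flat piece. -/
theorem value_function_iff_no_flat_piece {n : ℕ} (Ω : Set (Euc n))
    (hΩo : IsOpen Ω) (hΩb : Bornology.IsBounded Ω) (hΩne : Ω.Nonempty)
    (u : Euc n → ℝ)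
    (huc : ContinuousOn u (closure Ω)) (husol : IsSol Ω u) :
    (IsNormSubsol Ω u ∧ IsNormSupersol Ω u) ↔ ¬ HasFlat Ω u := by
  constructor
  · rintro ⟨hns, _⟩ hflat
    obtain ⟨V, hVne, hVo, hVΩ, c, hc⟩ := hflat
    obtain ⟨x₀, hx₀⟩ := hVne
    have hmax : IsLocalMaxOn (fun x => u x - (1/4 : ℝ) * qf x₀ x) Ω x₀ := by
      have hmem : V ∈ nhdsWithin x₀ Ω := mem_nhdsWithin_of_mem_nhds (hVo.mem_nhds hx₀)
      filter_upwards [hmem] with w hw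
      have h1 : u w = c := hc w hw
      have h2 : u x₀ = c := hc x₀ hx₀
      have h3 : (0:ℝ) ≤ (1/4 : ℝ) * qf x₀ w := by
        have : qf x₀ w = ‖w - x₀‖ ^ 2 := by
          simp only [qf, real_inner_self_eq_norm_sq]
        rw [this]; positivity
      have h4 : (1/4 : ℝ) * qf x₀ x₀ = 0 := by simp [qf]
      simp only [h1, h2, h4]
      linarith
    have hgrad : gradient (fun x => (1/4 : ℝ) * qf x₀ x) x₀ = 0 := by
      rw [gradient_psi]; simp
    obtain ⟨p, hp1, hp2⟩ :=
      (hns _ (contDiff_psi (1/4 : ℝ) x₀) x₀ (hVΩ hx₀) hmax).2 hgrad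
    rw [D2_psi, real_inner_self_eq_norm_sq, hp1] at hp2
    norm_num at hp2
  · intro hflat
    have hn : n ≠ 0 := by
      rintro rfl
      apply hflat
      obtain ⟨x₀, hx₀⟩ := hΩne
      refine ⟨Ω, ⟨x₀, hx₀⟩, hΩo, subset_rfl, u x₀, fun x _ => ?_⟩
      congr 1
      exact Subsingleton.elim _ _
    set e : Euc n := EuclideanSpace.single (⟨0, Nat.pos_of_ne_zero hn⟩ : Fin n) (1:ℝ) with hedef
    have he : ‖e‖ = 1 := by
      rw [hedef, EuclideanSpace.norm_single]
      norm_num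
    constructor
    · -- normalized subsolution
      intro φ hφ x₀ hx₀ hmax
      refine ⟨fun _ => by have := husol.1 φ hφ x₀ hx₀ hmax; linarith, fun hgrad0 => ?_⟩
      by_contra hcon
      push_neg at hcon
      have hsc : IsCompact (Metric.sphere (0:Euc n) 1) := isCompact_sphere 0 1
      have hsne : (Metric.sphere (0:Euc n) 1).Nonempty :=
        ⟨e, by rwa [mem_sphere_zero_iff_norm]⟩
      have hDcont : Continuous (fun p : Euc n => D2 φ x₀ p p) := by
        have h1 : Continuous (fun p : Euc n => (![p, p] : Fin 2 → Euc n)) := by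
          apply continuous_pi; intro i; fin_cases i <;> exact continuous_id
        exact (iteratedFDeriv ℝ 2 φ x₀).cont.comp h1
      obtain ⟨p₀, hp₀m, hp₀max⟩ := hsc.exists_isMaxOn hsne hDcont.continuousOn
      have hκ₀lt : D2 φ x₀ p₀ p₀ < 1 := hcon p₀ (mem_sphere_zero_iff_norm.1 hp₀m)
      set c₀ := max (D2 φ x₀ p₀ p₀) 0 with hc₀def
      have hc₀0 : 0 ≤ c₀ := le_max_right _ _
      have hc₀1 : c₀ < 1 := max_lt hκ₀lt one_pos
      have hQ : ∀ v : Euc n, D2 φ x₀ v v ≤ c₀ * ‖v‖ ^ 2 :=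
        D2_le_of_sphere φ x₀ c₀ hc₀0
          (fun p hp => le_trans (hp₀max (mem_sphere_zero_iff_norm.2 hp)) (le_max_left _ _))
      obtain ⟨σ, hσ, hσb⟩ := exists_ball_D2_le φ hφ x₀ c₀ ((1 - c₀)/3) hQ (by linarith)
      set a := c₀ + (1 - c₀)/3 with hadef
      set b := (a + 1)/2 with hbdef
      have ha : 0 < a := by rw [hadef]; linarith
      have ha1 : a < 1 := by rw [hadef]; linarith
      have hab : a < b := by rw [hbdef]; linarith
      have hb : b < 1 := by rw [hbdef]; linarith
      have hfder : fderiv ℝ φ x₀ = 0 := by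
        have h1 : (InnerProductSpace.toDual ℝ (Euc n)).symm (fderiv ℝ φ x₀) = 0 := hgrad0
        have h2 := congrArg (InnerProductSpace.toDual ℝ (Euc n)) h1
        rwa [LinearIsometryEquiv.apply_symm_apply, map_zero] at h2
      have htay := taylor_upper φ hφ x₀ hfder a σ hσb
      have hmax' : ∀ᶠ w in nhds x₀, u w - φ w ≤ u x₀ - φ x₀ := by
        have hh : nhdsWithin x₀ Ω = nhds x₀ := nhdsWithin_eq_nhds.2 (hΩo.mem_nhds hx₀)
        have hm : ∀ᶠ w in nhdsWithin x₀ Ω, u w - φ w ≤ u x₀ - φ x₀ := hmax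
        rwa [hh] at hm
      have hΩev : ∀ᶠ w in nhds x₀, w ∈ Ω := hΩo.mem_nhds hx₀
      obtain ⟨ε, hε, hev⟩ := Metric.eventually_nhds_iff.1 (hmax'.and hΩev)
      have hρ : 0 < min σ (ε/2) := lt_min hσ (by linarith)
      have hballΩ : Metric.closedBall x₀ (min σ (ε/2)) ⊆ Ω := by
        intro x hx
        have : dist x x₀ < ε := by
          have := hx
          rw [Metric.mem_closedBall] at this
          calc dist x x₀ ≤ min σ (ε/2) := this
            _ ≤ ε/2 := min_le_right _ _
            _ < ε := by linarith
        exact (hev this).2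
      have hupper : ∀ x ∈ Metric.closedBall x₀ (min σ (ε/2)),
          u x ≤ u x₀ + a / 2 * ‖x - x₀‖ ^ 2 := by
        intro x hx
        have hd : dist x x₀ < ε := by
          rw [Metric.mem_closedBall] at hx
          calc dist x x₀ ≤ min σ (ε/2) := hx
            _ ≤ ε/2 := min_le_right _ _
            _ < ε := by linarith
        have h1 := (hev hd).1
        have h2 := htay x (Metric.closedBall_subset_closedBall (min_le_left _ _) hx)
        linarith
      obtain ⟨τ, hτ, hflatloc⟩ := subsol_flat Ω u hΩo huc husol.1 x₀ (min σ (ε/2)) a b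
        hρ hballΩ ha hab hb hupper
      apply hflat
      refine ⟨Metric.ball x₀ (min τ (min σ (ε/2))), ⟨x₀, Metric.mem_ball_self (lt_min hτ hρ)⟩,
        Metric.isOpen_ball, ?_, u x₀, fun x hx => ?_⟩
      · exact (Metric.ball_subset_ball (min_le_right _ _)).trans
          (Metric.ball_subset_closedBall.trans hballΩ)
      · exact hflatloc x (Metric.ball_subset_ball (min_le_left _ _) hx)
    · -- normalized supersolution
      intro φ hφ y₀ hy₀ hmin
      refine ⟨fun _ => by have := husol.2 φ hφ y₀ hy₀ hmin; linarith, fun hgrad0 => ?_⟩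
      by_contra hcon
      push_neg at hcon
      have hsc : IsCompact (Metric.sphere (0:Euc n) 1) := isCompact_sphere 0 1
      have hsne : (Metric.sphere (0:Euc n) 1).Nonempty :=
        ⟨e, by rwa [mem_sphere_zero_iff_norm]⟩
      have hDcont : Continuous (fun p : Euc n => D2 φ y₀ p p) := by
        have h1 : Continuous (fun p : Euc n => (![p, p] : Fin 2 → Euc n)) := by
          apply continuous_pi; intro i; fin_cases i <;> exact continuous_id
        exact (iteratedFDeriv ℝ 2 φ y₀).cont.comp h1
      obtain ⟨p₁, hp₁m, hp₁min⟩ := hsc.exists_isMinOn hsne hDcont.continuousOn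
      set μ := D2 φ y₀ p₁ p₁ with hμdef
      have hμ1 : 1 < μ := hcon p₁ (mem_sphere_zero_iff_norm.1 hp₁m)
      have hQ : ∀ v : Euc n, v ≠ 0 → μ * ‖v‖ ^ 2 ≤ D2 φ y₀ v v :=
        D2_ge_of_sphere φ y₀ μ
          (fun p hp => hp₁min (mem_sphere_zero_iff_norm.2 hp))
      obtain ⟨σ, hσ, hσb⟩ := exists_ball_D2_ge φ hφ y₀ μ ((μ - 1)/3) hQ (by linarith)
      set bh := μ - (μ - 1)/3 with hbhdef
      set bl := 1 + (μ - 1)/3 with hbldef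
      have hbl1 : 1 < bl := by rw [hbldef]; linarith
      have hblh : bl < bh := by rw [hbldef, hbhdef]; linarith
      have hfder : fderiv ℝ φ y₀ = 0 := by
        have h1 : (InnerProductSpace.toDual ℝ (Euc n)).symm (fderiv ℝ φ y₀) = 0 := hgrad0
        have h2 := congrArg (InnerProductSpace.toDual ℝ (Euc n)) h1
        rwa [LinearIsometryEquiv.apply_symm_apply, map_zero] at h2
      have hσb' : ∀ x ∈ Metric.closedBall y₀ σ, ∀ v : Euc n, bh * ‖v‖ ^ 2 ≤ D2 φ x v v := by
        intro x hx v
        rcases eq_or_ne v 0 with rfl | hv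
        · have : D2 φ x ((0:ℝ) • (0:Euc n)) ((0:ℝ) • (0:Euc n)) = 0 := by
            rw [D2_smul_smul]; ring
          simpa using this.ge.trans' (by simp)
        · exact hσb x hx v hv
      have htay := taylor_lower φ hφ y₀ hfder bh σ hσb'
      have hmin' : ∀ᶠ w in nhds y₀, u y₀ - φ y₀ ≤ u w - φ w := by
        have hh : nhdsWithin y₀ Ω = nhds y₀ := nhdsWithin_eq_nhds.2 (hΩo.mem_nhds hy₀)
        have hm : ∀ᶠ w in nhdsWithin y₀ Ω, u y₀ - φ y₀ ≤ u w - φ w := hmin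
        rwa [hh] at hm
      have hΩev : ∀ᶠ w in nhds y₀, w ∈ Ω := hΩo.mem_nhds hy₀
      obtain ⟨ε, hε, hev⟩ := Metric.eventually_nhds_iff.1 (hmin'.and hΩev)
      have hρ : 0 < min σ (ε/2) := lt_min hσ (by linarith)
      have hballΩ : Metric.closedBall y₀ (min σ (ε/2)) ⊆ Ω := by
        intro x hx
        have : dist x y₀ < ε := by
          rw [Metric.mem_closedBall] at hx
          calc dist x y₀ ≤ min σ (ε/2) := hx
            _ ≤ ε/2 := min_le_right _ _
            _ < ε := by linarith
        exact (hev this).2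
      have hlower : ∀ x ∈ Metric.closedBall y₀ (min σ (ε/2)),
          u y₀ + bh / 2 * ‖x - y₀‖ ^ 2 ≤ u x := by
        intro x hx
        have hd : dist x y₀ < ε := by
          rw [Metric.mem_closedBall] at hx
          calc dist x y₀ ≤ min σ (ε/2) := hx
            _ ≤ ε/2 := min_le_right _ _
            _ < ε := by linarith
        have h1 := (hev hd).1
        have h2 := htay x (Metric.closedBall_subset_closedBall (min_le_left _ _) hx)
        linarith
      exact supersol_no_steep_min Ω u huc husol.2 y₀ (min σ (ε/2)) bl bh hρ hballΩ
        hbl1 hblh hlower e he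
end
end
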